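/- The operator D_L commutes with differentiation on periodic C¹ functions: d/dx (D_L[v])(x) = D_L[v'](x) for all x ∈ [a,b]. -/

import Mathlib

open MeasureTheory intervalIntegral

noncomputable def IL (α a : ℝ) (v : ℝ → ℝ) (x : ℝ) : ℝ :=
  α * ∫ y in a..x, Real.exp (-(α * (x - y))) * v y

noncomputable def Linv (α a b : ℝ) (v : ℝ → ℝ) (x : ℝ) : ℝ :=
  IL α a v x + (IL α a v b / (1 - Real.exp (-(α * (b - a))))) * Real.exp (-(α * (x - a)))

noncomputable def DL (α a b : ℝ) (v : ℝ → ℝ) (x : ℝ) : ℝ := v x - Linv α a b v x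

lemma IL_eq (α a : ℝ) (v : ℝ → ℝ) (x : ℝ) :
    IL α a v x = α * (Real.exp (-(α*x)) * ∫ y in a..x, Real.exp (α*y) * v y) := by
  unfold IL
  congr 1
  rw [← intervalIntegral.integral_const_mul]
  apply intervalIntegral.integral_congr
  intro y hy
  show Real.exp (-(α*(x-y))) * v y = Real.exp (-(α*x)) * (Real.exp (α*y) * v y)
  rw [← mul_assoc, ← Real.exp_add]
  congr 2
  ring

lemma hasDerivAt_F (α a : ℝ) (w : ℝ → ℝ) (hw : Continuous w) (x : ℝ) :
    HasDerivAt (fun x => ∫ y in a..x, Real.exp (α*y) * w y) (Real.exp (α*x) * w x) x := by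
  have hc : Continuous (fun y => Real.exp (α*y) * w y) := by continuity
  exact intervalIntegral.integral_hasDerivAt_right (hc.intervalIntegrable _ _)
    (hc.stronglyMeasurableAtFilter _ _) hc.continuousAt

lemma hasDerivAt_exp_neg (α c : ℝ) (x : ℝ) :
    HasDerivAt (fun x => Real.exp (-(α*(x-c)))) (-α * Real.exp (-(α*(x-c)))) x := by
  have h1 : HasDerivAt (fun x : ℝ => -(α*(x-c))) (-α) x := by
    have : HasDerivAt (fun x : ℝ => x - c) 1 x := (hasDerivAt_id x).sub_const c
    exact ((this.const_mul α).neg).congr_deriv (by ring)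
  refine ((Real.hasDerivAt_exp (-(α*(x-c)))).comp x h1).congr_deriv ?_
  ring

lemma hasDerivAt_IL (α a : ℝ) (w : ℝ → ℝ) (hw : Continuous w) (x : ℝ) :
    HasDerivAt (IL α a w) (α * w x - α * IL α a w x) x := by
  have hF := hasDerivAt_F α a w hw x
  have hE : HasDerivAt (fun x => Real.exp (-(α*x))) (-α * Real.exp (-(α*x))) x := by
    simpa using hasDerivAt_exp_neg α 0 x
  have h := ((hE.mul hF).const_mul α)
  have heq : IL α a w = fun x => α * (Real.exp (-(α*x)) * ∫ y in a..x, Real.exp (α*y) * w y) :=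
    funext (IL_eq α a w)
  rw [heq]
  refine h.congr_deriv ?_
  have hee : Real.exp (-(α*x)) * Real.exp (α*x) = 1 := by
    rw [← Real.exp_add]; simp
  beta_reduce
  linear_combination (α * w x) * hee

lemma IL_deriv_eq (α a : ℝ) (v : ℝ → ℝ) (hv : ContDiff ℝ 1 v) (x : ℝ) :
    IL α a (deriv v) x
      = α * v x - α * Real.exp (-(α*(x-a))) * v a - α * IL α a v x := by
  have hvc : Continuous v := hv.continuous
  have hdc : Continuous (deriv v) := hv.continuous_deriv le_rfl
  have key : ∫ y in a..x, (α * Real.exp (α*y) * v y + Real.exp (α*y) * deriv v y)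
      = Real.exp (α*x) * v x - Real.exp (α*a) * v a := by
    apply intervalIntegral.integral_eq_sub_of_hasDerivAt
    · intro t ht
      have he : HasDerivAt (fun y => Real.exp (α*y)) (α * Real.exp (α*t)) t := by
        have h1 : HasDerivAt (fun y : ℝ => α*y) α t := by
          simpa using (hasDerivAt_id t).const_mul α
        exact ((Real.hasDerivAt_exp (α*t)).comp t h1).congr_deriv (by ring)
      have hvd : HasDerivAt v (deriv v t) t := (hv.differentiable one_ne_zero t).hasDerivAt
      exact (he.mul hvd).congr_deriv (by ring)
    · apply Continuous.intervalIntegrable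
      continuity
  have h1 : Continuous (fun y => α * Real.exp (α*y) * v y) := by continuity
  have h2 : Continuous (fun y => Real.exp (α*y) * deriv v y) := by continuity
  rw [intervalIntegral.integral_add (h1.intervalIntegrable _ _) (h2.intervalIntegrable _ _)]
    at key
  have h3 : (∫ y in a..x, α * Real.exp (α*y) * v y)
      = α * ∫ y in a..x, Real.exp (α*y) * v y := by
    rw [← intervalIntegral.integral_const_mul]
    apply intervalIntegral.integral_congr
    intro y hy; ring
  rw [h3] at key
  have hsplit : (∫ y in a..x, Real.exp (α*y) * deriv v y)
      = Real.exp (α*x) * v x - Real.exp (α*a) * v a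
        - α * ∫ y in a..x, Real.exp (α*y) * v y := by linarith
  rw [IL_eq, IL_eq, hsplit]
  have hee : Real.exp (-(α*x)) * Real.exp (α*x) = 1 := by
    rw [← Real.exp_add]; simp
  have h2' : Real.exp (-(α*x)) * Real.exp (α*a) = Real.exp (-(α*(x-a))) := by
    rw [← Real.exp_add]; congr 1; ring
  rw [← h2']
  linear_combination (α * v x) * hee

theorem deriv_DL_comm (a b α : ℝ) (hab : a < b) (hα : 0 < α)
    (v : ℝ → ℝ) (hv : ContDiff ℝ 1 v) (hper : v a = v b)
    (hper' : deriv v a = deriv v b) :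
    ∀ x ∈ Set.Icc a b, HasDerivAt (DL α a b v) (DL α a b (deriv v) x) x := by
  intro x _
  have hvc : Continuous v := hv.continuous
  have hD0 : 1 - Real.exp (-(α*(b-a))) ≠ 0 := by
    have : Real.exp (-(α*(b-a))) < 1 := by
      rw [Real.exp_lt_one_iff]
      nlinarith
    linarith
  have hIL := hasDerivAt_IL α a v hvc x
  have hE := hasDerivAt_exp_neg α a x
  have hLinv : HasDerivAt (Linv α a b v) (α * v x - α * Linv α a b v x) x := by
    have h := hIL.add (hE.const_mul (IL α a v b / (1 - Real.exp (-(α*(b-a))))))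
    have heq : Linv α a b v = fun x => IL α a v x
        + (IL α a v b / (1 - Real.exp (-(α*(b-a))))) * Real.exp (-(α*(x-a))) := rfl
    rw [heq]
    refine h.congr_deriv ?_
    beta_reduce
    ring
  have hder : HasDerivAt (DL α a b v) (deriv v x - (α * v x - α * Linv α a b v x)) x := by
    have hvd : HasDerivAt v (deriv v x) x := (hv.differentiable one_ne_zero x).hasDerivAt
    exact hvd.sub hLinv
  have hkey : DL α a b (deriv v) x = deriv v x - (α * v x - α * Linv α a b v x) := by
    unfold DL Linv
    rw [IL_deriv_eq α a v hv x, IL_deriv_eq α a v hv b, ← hper]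
    field_simp
    ring
  rw [hkey]
  exact hder
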